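/- Let κ : ℝⁿ → ℝⁿ be linear with κ² = 1 and A invertible with κA = Aᵗκᵗ. Then the pullback κ* on forms and the twisted Hodge operators satisfy κ* ∘ *^{Aᵗ} = (det κ) · *^A ∘ κ* on l-forms. -/

import Mathlib

open Finset

noncomputable section

abbrev FormIdx (n k : ℕ) := {s : Finset (Fin n) // s.card = k}

abbrev KForm (n k : ℕ) := FormIdx n k → ℝ

def subEmb {n k : ℕ} (S : FormIdx n k) : Fin k → Fin n := fun j => (S.1.orderIsoOfFin S.2 j : Fin n)

/-- the bilinear pairing `(ω|μ)_A = ⟨(∧ˡA)ω, μ⟩` -/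
def pairingA {n k : ℕ} (A : Matrix (Fin n) (Fin n) ℝ) (u v : KForm n k) : ℝ :=
  ∑ T : FormIdx n k, ∑ S : FormIdx n k,
    (A.submatrix (subEmb S) (subEmb T)).det * u T * v S

/-- the linear map on `k`-forms induced by a matrix acting on covectors
(e.g. `formMap Aᵀ = ∧ᵏ(ι⁻¹Aᵗ)`) -/
def formMap {n k : ℕ} (B : Matrix (Fin n) (Fin n) ℝ) (u : KForm n k) : KForm n k :=
  fun S => ∑ T : FormIdx n k, (B.submatrix (subEmb S) (subEmb T)).det * u T

/-- sign of the shuffle putting the block `t` before the block `s` -/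
def shuffleSign {n : ℕ} (t s : Finset (Fin n)) : ℝ :=
  (-1 : ℝ) ^ (∑ x ∈ t, (s.filter (· < x)).card)

/-- exterior (wedge) product -/
def wedgeP {n k l : ℕ} (α : KForm n k) (β : KForm n l) : KForm n (k + l) :=
  fun S => ∑ T : FormIdx n k, if h : T.1 ⊆ S.1 then
    shuffleSign T.1 (S.1 \ T.1) * α T * β ⟨S.1 \ T.1, by
      rw [Finset.card_sdiff, Finset.inter_eq_left.mpr h, S.2, T.2]; omega⟩ else 0

/-- the coefficient of `dx₁∧⋯∧dxₙ` of a top-degree form (zero unless `m = n`) -/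
def topCoeff {n m : ℕ} (v : KForm n m) : ℝ :=
  if h : m = n then v ⟨Finset.univ, by subst h; simp⟩ else 0

/-- the standard Euclidean Hodge star -/
def hodgeStd {n l : ℕ} (hl : l ≤ n) (μ : KForm n l) : KForm n (n - l) :=
  fun S => shuffleSign S.1ᶜ S.1 * μ ⟨S.1ᶜ, by
    rw [Finset.card_compl, S.2, Fintype.card_fin]; omega⟩

/-- re-indexing of a form along an equality of degrees -/
def castForm {n m m' : ℕ} (h : m = m') (v : KForm n m) : KForm n m' :=
  fun S => v ⟨S.1, by rw [S.2, h]⟩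


set_option linter.unusedVariables false




namespace PTH
variable {n l : ℕ}
def cpl (hl : l ≤ n) (S : FormIdx n l) : FormIdx n (n - l) :=
  ⟨S.1ᶜ, by rw [Finset.card_compl, S.2, Fintype.card_fin]⟩

def cpl' (hl : l ≤ n) (V : FormIdx n (n - l)) : FormIdx n l :=
  ⟨V.1ᶜ, by rw [Finset.card_compl, V.2, Fintype.card_fin]; omega⟩

lemma cpl_cpl' (hl : l ≤ n) (V : FormIdx n (n - l)) : cpl hl (cpl' hl V) = V := by
  simp [cpl, cpl']

lemma cpl'_cpl (hl : l ≤ n) (S : FormIdx n l) : cpl' hl (cpl hl S) = S := by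
  simp [cpl, cpl']
lemma subEmb_strictMono {k : ℕ} (S : FormIdx n k) : StrictMono (subEmb S) := by
  intro a b hab
  exact (S.1.orderIsoOfFin S.2).lt_iff_lt.2 hab
lemma subEmb_injective {k : ℕ} (S : FormIdx n k) : Function.Injective (subEmb S) :=
  (subEmb_strictMono S).injective
lemma subEmb_mem {k : ℕ} (S : FormIdx n k) (i : Fin k) : subEmb S i ∈ S.1 :=
  (S.1.orderIsoOfFin S.2 i).2

lemma subEmb_surj {k : ℕ} (S : FormIdx n k) {x : Fin n} (hx : x ∈ S.1) :
    ∃ i, subEmb S i = x :=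
  ⟨(S.1.orderIsoOfFin S.2).symm ⟨x, hx⟩, by simp [subEmb]⟩

-- glue positions
def colL (hl : l ≤ n) : Fin l → Fin n := Fin.castLE hl
def colR (hl : l ≤ n) : Fin (n - l) → Fin n := fun j => ⟨l + j, by omega⟩

def glueF (hl : l ≤ n) (T : FormIdx n l) (U : FormIdx n (n - l)) : Fin n → Fin n :=
  fun i => if h : (i : ℕ) < l then subEmb T ⟨i, h⟩ else subEmb U ⟨(i : ℕ) - l, by omega⟩

lemma glueF_colL (hl : l ≤ n) (T : FormIdx n l) (U : FormIdx n (n - l)) (a : Fin l) :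
    glueF hl T U (colL hl a) = subEmb T a := by
  simp only [glueF, colL]
  exact dif_pos a.2

lemma glueF_colR (hl : l ≤ n) (T : FormIdx n l) (U : FormIdx n (n - l)) (b : Fin (n - l)) :
    glueF hl T U (colR hl b) = subEmb U b := by
  simp only [glueF, colR]
  split_ifs with h
  · omega
  · congr 1
    ext
    simp

lemma glueF_bij (hl : l ≤ n) (S : FormIdx n l) :
    Function.Bijective (glueF hl S (cpl hl S)) := by
  rw [← Finite.injective_iff_bijective]
  intro i j hij
  unfold glueF at hij
  split_ifs at hij with h1 h2 h2
  · have h := subEmb_injective S hij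
    have : (i : ℕ) = (j : ℕ) := by simpa using congrArg Fin.val h
    exact Fin.ext this
  · exfalso
    have m1 := subEmb_mem S ⟨(i : ℕ), h1⟩
    have m2 := subEmb_mem (cpl hl S) ⟨(j : ℕ) - l, by omega⟩
    rw [hij] at m1
    exact (Finset.mem_compl.1 m2) m1
  · exfalso
    have m1 := subEmb_mem (cpl hl S) ⟨(i : ℕ) - l, by omega⟩
    have m2 := subEmb_mem S ⟨(j : ℕ), h2⟩
    rw [hij] at m1
    exact (Finset.mem_compl.1 m1) m2
  · have h := subEmb_injective (cpl hl S) hij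
    have : (i : ℕ) - l = (j : ℕ) - l := by simpa using congrArg Fin.val h
    exact Fin.ext (by omega)

def shufflePerm (hl : l ≤ n) (S : FormIdx n l) : Equiv.Perm (Fin n) :=
  Equiv.ofBijective _ (glueF_bij hl S)

lemma shufflePerm_apply (hl : l ≤ n) (S : FormIdx n l) (i : Fin n) :
    shufflePerm hl S i = glueF hl S (cpl hl S) i := rfl

def eSum (hl : l ≤ n) : Fin l ⊕ Fin (n - l) ≃ Fin n :=
  finSumFinEquiv.trans (finCongr (by omega))

lemma eSum_inl (hl : l ≤ n) (a : Fin l) : eSum hl (Sum.inl a) = colL hl a := by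
  ext; simp [eSum, colL]

lemma eSum_inr (hl : l ≤ n) (b : Fin (n - l)) : eSum hl (Sum.inr b) = colR hl b := by
  ext; simp [eSum, colR]

def blockPerm (hl : l ≤ n) (σ : Equiv.Perm (Fin l)) (τ : Equiv.Perm (Fin (n - l))) :
    Equiv.Perm (Fin n) := (eSum hl).permCongr (σ.sumCongr τ)

lemma blockPerm_colL (hl : l ≤ n) (σ : Equiv.Perm (Fin l)) (τ : Equiv.Perm (Fin (n - l)))
    (a : Fin l) : blockPerm hl σ τ (colL hl a) = colL hl (σ a) := by
  rw [← eSum_inl hl a, blockPerm, Equiv.permCongr_apply, Equiv.symm_apply_apply]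
  simp [eSum_inl]

lemma blockPerm_colR (hl : l ≤ n) (σ : Equiv.Perm (Fin l)) (τ : Equiv.Perm (Fin (n - l)))
    (b : Fin (n - l)) : blockPerm hl σ τ (colR hl b) = colR hl (τ b) := by
  rw [← eSum_inr hl b, blockPerm, Equiv.permCongr_apply, Equiv.symm_apply_apply]
  simp [eSum_inr]

lemma sign_blockPerm (hl : l ≤ n) (σ : Equiv.Perm (Fin l)) (τ : Equiv.Perm (Fin (n - l))) :
    Equiv.Perm.sign (blockPerm hl σ τ) = Equiv.Perm.sign σ * Equiv.Perm.sign τ := by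
  rw [blockPerm, Equiv.Perm.sign_permCongr, Equiv.Perm.sign_sumCongr]

def bigPerm (hl : l ≤ n)
    (x : Σ _ : FormIdx n l, Equiv.Perm (Fin l) × Equiv.Perm (Fin (n - l))) :
    Equiv.Perm (Fin n) :=
  shufflePerm hl x.1 * blockPerm hl x.2.1 x.2.2

lemma bigPerm_colL (hl : l ≤ n) (S : FormIdx n l) (σ : Equiv.Perm (Fin l))
    (τ : Equiv.Perm (Fin (n - l))) (a : Fin l) :
    bigPerm hl ⟨S, σ, τ⟩ (colL hl a) = subEmb S (σ a) := by
  rw [bigPerm, Equiv.Perm.mul_apply, blockPerm_colL, shufflePerm_apply, glueF_colL]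

lemma bigPerm_colR (hl : l ≤ n) (S : FormIdx n l) (σ : Equiv.Perm (Fin l))
    (τ : Equiv.Perm (Fin (n - l))) (b : Fin (n - l)) :
    bigPerm hl ⟨S, σ, τ⟩ (colR hl b) = subEmb (cpl hl S) (τ b) := by
  rw [bigPerm, Equiv.Perm.mul_apply, blockPerm_colR, shufflePerm_apply, glueF_colR]

end PTH

namespace PTH
variable {n l : ℕ}

lemma colL_injective (hl : l ≤ n) : Function.Injective (colL hl) :=
  Fin.castLE_injective hl

lemma bigPerm_bijective (hl : l ≤ n) : Function.Bijective (bigPerm hl) := by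
  constructor
  · rintro ⟨S, σ, τ⟩ ⟨S', σ', τ'⟩ h
    have key : ∀ a, subEmb S (σ a) = subEmb S' (σ' a) := fun a => by
      rw [← bigPerm_colL hl S σ τ, h, bigPerm_colL]
    have hS : S = S' := by
      apply Subtype.ext
      apply Finset.eq_of_subset_of_card_le
      · intro z hz
        obtain ⟨i, rfl⟩ := subEmb_surj S hz
        have : subEmb S i = subEmb S' (σ' (σ.symm i)) := by
          rw [← key (σ.symm i), Equiv.apply_symm_apply]
        rw [this]
        exact subEmb_mem S' _
      · rw [S.2, S'.2]
    subst hS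
    have keyR : ∀ b, subEmb (cpl hl S) (τ b) = subEmb (cpl hl S) (τ' b) := fun b => by
      rw [← bigPerm_colR hl S σ τ, h, bigPerm_colR]
    have hσ : σ = σ' := Equiv.ext fun a => subEmb_injective S (key a)
    have hτ : τ = τ' := Equiv.ext fun b => subEmb_injective (cpl hl S) (keyR b)
    rw [hσ, hτ]
  · intro π
    have hLinj : Function.Injective (fun a : Fin l => π (colL hl a)) :=
      π.injective.comp (colL_injective hl)
    have hcard : (Finset.univ.image (fun a : Fin l => π (colL hl a))).card = l := by
      rw [Finset.card_image_of_injective _ hLinj, Finset.card_univ, Fintype.card_fin]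
    set S : FormIdx n l := ⟨Finset.univ.image (fun a : Fin l => π (colL hl a)), hcard⟩ with hSdef
    have hmemL : ∀ a, π (colL hl a) ∈ S.1 := fun a =>
      Finset.mem_image_of_mem _ (Finset.mem_univ a)
    have hmemR : ∀ b, π (colR hl b) ∈ (cpl hl S).1 := by
      intro b
      rw [cpl, Finset.mem_compl]
      intro hmem
      obtain ⟨a, -, ha⟩ := Finset.mem_image.1 hmem
      have : colL hl a = colR hl b := π.injective ha
      have := congrArg Fin.val this
      simp [colL, colR] at this
      omega
    have hσinj : Function.Injective
        (fun a => (S.1.orderIsoOfFin S.2).symm ⟨π (colL hl a), hmemL a⟩) := by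
      intro a b hab
      have := congrArg (fun z => ((S.1.orderIsoOfFin S.2) z : Fin n)) hab
      simp only [OrderIso.apply_symm_apply] at this
      exact colL_injective hl (π.injective this)
    have hτinj : Function.Injective
        (fun b => ((cpl hl S).1.orderIsoOfFin (cpl hl S).2).symm ⟨π (colR hl b), hmemR b⟩) := by
      intro a b hab
      have := congrArg (fun z => (((cpl hl S).1.orderIsoOfFin (cpl hl S).2) z : Fin n)) hab
      simp only [OrderIso.apply_symm_apply] at this
      have : colR hl a = colR hl b := π.injective this
      have := congrArg Fin.val this
      simp [colR] at this
      exact Fin.ext this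
    refine ⟨⟨S, Equiv.ofBijective _ (Finite.injective_iff_bijective.1 hσinj),
      Equiv.ofBijective _ (Finite.injective_iff_bijective.1 hτinj)⟩, ?_⟩
    apply Equiv.ext
    intro i
    by_cases h : (i : ℕ) < l
    · have hi : i = colL hl ⟨i, h⟩ := Fin.ext rfl
      rw [hi, bigPerm_colL]
      simp [subEmb, Equiv.ofBijective_apply]
    · have hi : i = colR hl ⟨(i : ℕ) - l, by omega⟩ := Fin.ext (by simp [colR]; omega)
      rw [hi, bigPerm_colR]
      simp [subEmb, Equiv.ofBijective_apply]

end PTH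

namespace PTH
variable {n l : ℕ}

open Equiv.Perm in
lemma laplace (hl : l ≤ n) (M : Matrix (Fin n) (Fin n) ℝ) :
    M.det = ∑ S : FormIdx n l,
      ((Equiv.Perm.sign (shufflePerm hl S) : ℤ) : ℝ)
        * (M.submatrix (subEmb S) (colL hl)).det
        * (M.submatrix (subEmb (cpl hl S)) (colR hl)).det := by
  rw [Matrix.det_apply']
  have step1 :
      (∑ x : Σ _ : FormIdx n l, Equiv.Perm (Fin l) × Equiv.Perm (Fin (n - l)),
        ((sign (bigPerm hl x) : ℤ) : ℝ) * ∏ i, M (bigPerm hl x i) i)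
      = ∑ π : Equiv.Perm (Fin n), ((sign π : ℤ) : ℝ) * ∏ i, M (π i) i :=
    Fintype.sum_bijective (bigPerm hl) (bigPerm_bijective hl) _ _ (fun x => rfl)
  rw [← step1, ← Finset.univ_sigma_univ, Finset.sum_sigma]
  apply Finset.sum_congr rfl
  intro S _
  rw [Fintype.sum_prod_type, Matrix.det_apply', Matrix.det_apply']
  have rhs : ((sign (shufflePerm hl S) : ℤ) : ℝ)
        * (∑ σ : Equiv.Perm (Fin l), ((sign σ : ℤ) : ℝ)
            * ∏ a, (M.submatrix (subEmb S) (colL hl)) (σ a) a)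
        * (∑ τ : Equiv.Perm (Fin (n - l)), ((sign τ : ℤ) : ℝ)
            * ∏ b, (M.submatrix (subEmb (cpl hl S)) (colR hl)) (τ b) b)
      = ∑ σ : Equiv.Perm (Fin l), ∑ τ : Equiv.Perm (Fin (n - l)),
          ((sign (shufflePerm hl S) : ℤ) : ℝ)
            * (((sign σ : ℤ) : ℝ) * ∏ a, M (subEmb S (σ a)) (colL hl a))
            * (((sign τ : ℤ) : ℝ) * ∏ b, M (subEmb (cpl hl S) (τ b)) (colR hl b)) := by
    rw [mul_assoc, Finset.sum_mul_sum, Finset.mul_sum]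
    apply Finset.sum_congr rfl; intro σ _
    rw [Finset.mul_sum]
    apply Finset.sum_congr rfl; intro τ _
    simp only [Matrix.submatrix_apply]
    ring
  rw [rhs]
  apply Finset.sum_congr rfl; intro σ _
  apply Finset.sum_congr rfl; intro τ _
  have hsign : ((sign (bigPerm hl ⟨S, (σ, τ)⟩) : ℤ) : ℝ)
      = ((sign (shufflePerm hl S) : ℤ) : ℝ) * ((sign σ : ℤ) : ℝ) * ((sign τ : ℤ) : ℝ) := by
    rw [bigPerm, Equiv.Perm.sign_mul, sign_blockPerm]
    push_cast
    ring
  have hprod : (∏ i, M (bigPerm hl ⟨S, (σ, τ)⟩ i) i)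
      = (∏ a, M (subEmb S (σ a)) (colL hl a))
        * ∏ b, M (subEmb (cpl hl S) (τ b)) (colR hl b) := by
    rw [← Fintype.prod_bijective (eSum hl) (Equiv.bijective _)
      (fun x => M (bigPerm hl ⟨S, (σ, τ)⟩ (eSum hl x)) (eSum hl x))
      (fun i => M (bigPerm hl ⟨S, (σ, τ)⟩ i) i) (fun x => rfl)]
    rw [Fintype.prod_sum_type]
    simp only [eSum_inl, eSum_inr, bigPerm_colL, bigPerm_colR]
  rw [hsign, hprod]
  ring

end PTH



namespace PTH
variable {n l : ℕ}
open Equiv Equiv.Perm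

lemma sign_eq_signAux {m : ℕ} (f : Equiv.Perm (Fin m)) :
    Equiv.Perm.sign f = Equiv.Perm.signAux f := by
  refine Equiv.Perm.swap_induction_on f ?_ ?_
  · simp [Equiv.Perm.signAux_one]
  · intro f x y hxy ih
    rw [Equiv.Perm.sign_mul, Equiv.Perm.signAux_mul, Equiv.Perm.sign_swap hxy,
      Equiv.Perm.signAux_swap hxy, ih]

lemma shufflePerm_mem_left (hl : l ≤ n) (S : FormIdx n l) {i : Fin n} (h : (i : ℕ) < l) :
    shufflePerm hl S i ∈ S.1 := by
  rw [shufflePerm_apply, glueF, dif_pos h]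
  exact subEmb_mem S _

lemma shufflePerm_mem_right (hl : l ≤ n) (S : FormIdx n l) {i : Fin n} (h : ¬ (i : ℕ) < l) :
    shufflePerm hl S i ∈ S.1ᶜ := by
  rw [shufflePerm_apply, glueF, dif_neg h]
  exact subEmb_mem (cpl hl S) _

lemma shufflePerm_mono_left (hl : l ≤ n) (S : FormIdx n l) {i j : Fin n}
    (hi : (i : ℕ) < l) (hj : (j : ℕ) < l) (hij : i < j) :
    shufflePerm hl S i < shufflePerm hl S j := by
  rw [shufflePerm_apply, shufflePerm_apply, glueF, glueF, dif_pos hi, dif_pos hj]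
  exact subEmb_strictMono S (by exact hij)

lemma shufflePerm_mono_right (hl : l ≤ n) (S : FormIdx n l) {i j : Fin n}
    (hi : ¬ (i : ℕ) < l) (hj : ¬ (j : ℕ) < l) (hij : i < j) :
    shufflePerm hl S i < shufflePerm hl S j := by
  rw [shufflePerm_apply, shufflePerm_apply, glueF, glueF, dif_neg hi, dif_neg hj]
  refine subEmb_strictMono (cpl hl S) ?_
  have : (i : ℕ) < (j : ℕ) := hij
  exact Fin.mk_lt_mk.2 (by omega)

lemma card_inversions (hl : l ≤ n) (S : FormIdx n l) :
    ((Equiv.Perm.finPairsLT n).filter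
        (fun x => shufflePerm hl S x.1 ≤ shufflePerm hl S x.2)).card
      = ∑ x ∈ S.1, (S.1ᶜ.filter (· < x)).card := by
  set ρ := shufflePerm hl S with hρ
  have key : ((Equiv.Perm.finPairsLT n).filter (fun x => ρ x.1 ≤ ρ x.2)).card
      = ((S.1 ×ˢ S.1ᶜ).filter (fun p => p.2 < p.1)).card := by
    apply Finset.card_bij (fun x _ => ((ρ x.2 : Fin n), (ρ x.1 : Fin n)))
    · rintro ⟨x1, x2⟩ hx
      rw [Finset.mem_filter, Equiv.Perm.mem_finPairsLT] at hx
      obtain ⟨hlt, hle⟩ := hx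
      have hne : x1 ≠ x2 := ne_of_gt hlt
      have hstrict : ρ x1 < ρ x2 := lt_of_le_of_ne hle (fun h => hne (ρ.injective h))
      have hcase : (x2 : ℕ) < l ∧ ¬ (x1 : ℕ) < l := by
        by_cases h1 : (x1 : ℕ) < l <;> by_cases h2 : (x2 : ℕ) < l
        · exact absurd (shufflePerm_mono_left hl S h2 h1 hlt) (not_lt.2 hstrict.le)
        · exfalso; have : (x2:ℕ) < (x1:ℕ) := hlt; omega
        · exact ⟨h2, h1⟩
        · exact absurd (shufflePerm_mono_right hl S h2 h1 hlt) (not_lt.2 hstrict.le)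
      rw [Finset.mem_filter, Finset.mem_product]
      exact ⟨⟨shufflePerm_mem_left hl S hcase.1, shufflePerm_mem_right hl S hcase.2⟩, hstrict⟩
    · rintro ⟨x1, x2⟩ hx ⟨y1, y2⟩ hy h
      rw [Prod.mk.injEq] at h
      have h1 : x1 = y1 := ρ.injective h.2
      have h2 : x2 = y2 := ρ.injective h.1
      subst h1; subst h2; rfl
    · rintro ⟨a, b⟩ hab
      rw [Finset.mem_filter, Finset.mem_product] at hab
      obtain ⟨⟨haS, hbS⟩, hba⟩ := hab
      obtain ⟨i1, hi1⟩ := subEmb_surj S haS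
      have hbc : b ∈ (cpl hl S).1 := hbS
      obtain ⟨i2, hi2⟩ := subEmb_surj (cpl hl S) hbc
      refine ⟨⟨colR hl i2, colL hl i1⟩, ?_, ?_⟩
      · rw [Finset.mem_filter, Equiv.Perm.mem_finPairsLT]
        have e1 : ρ (colL hl i1) = a := by rw [hρ, shufflePerm_apply, glueF_colL, hi1]
        have e2 : ρ (colR hl i2) = b := by rw [hρ, shufflePerm_apply, glueF_colR, hi2]
        constructor
        · show colL hl i1 < colR hl i2
          have : (colL hl i1 : ℕ) = (i1 : ℕ) := rfl
          have h2 : (colR hl i2 : ℕ) = l + (i2 : ℕ) := rfl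
          have := i1.2
          exact Fin.mk_lt_mk.2 (by omega)
        · show ρ (colR hl i2) ≤ ρ (colL hl i1)
          rw [e1, e2]; exact hba.le
      · have e1 : ρ (colL hl i1) = a := by rw [hρ, shufflePerm_apply, glueF_colL, hi1]
        have e2 : ρ (colR hl i2) = b := by rw [hρ, shufflePerm_apply, glueF_colR, hi2]
        rw [e1, e2]
  rw [key]
  rw [Finset.card_filter, Finset.sum_product]
  apply Finset.sum_congr rfl
  intro a _
  rw [Finset.card_filter]

lemma sign_shufflePerm (hl : l ≤ n) (S : FormIdx n l) :
    ((Equiv.Perm.sign (shufflePerm hl S) : ℤ) : ℝ) = shuffleSign S.1 S.1ᶜ := by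
  rw [sign_eq_signAux, Equiv.Perm.signAux]
  rw [Finset.prod_ite, Finset.prod_const, Finset.prod_const, one_pow, mul_one]
  rw [card_inversions hl S]
  rw [shuffleSign]
  simp

end PTH

namespace PTH
variable {n : ℕ}
open Equiv Equiv.Perm

lemma det_submatrix_one {k : ℕ} (S T : FormIdx n k) :
    ((1 : Matrix (Fin n) (Fin n) ℝ).submatrix (subEmb S) (subEmb T)).det
      = if S = T then 1 else 0 := by
  split_ifs with h
  · subst h
    have : (1 : Matrix (Fin n) (Fin n) ℝ).submatrix (subEmb S) (subEmb S)
        = (1 : Matrix (Fin k) (Fin k) ℝ) := by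
      ext i j
      simp only [Matrix.submatrix_apply, Matrix.one_apply]
      by_cases hij : i = j
      · simp [hij]
      · rw [if_neg hij, if_neg (fun hc => hij (subEmb_injective S hc))]
    rw [this, Matrix.det_one]
  · obtain ⟨x, hxT, hxS⟩ : ∃ x ∈ T.1, x ∉ S.1 := by
      by_contra hc
      push_neg at hc
      exact h (Subtype.ext (Finset.eq_of_subset_of_card_le hc (by rw [S.2, T.2])).symm)
    obtain ⟨j, hj⟩ := subEmb_surj T hxT
    apply Matrix.det_eq_zero_of_column_eq_zero j
    intro i
    simp only [Matrix.submatrix_apply, Matrix.one_apply]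
    rw [if_neg]
    intro hc
    apply hxS
    rw [← hj, ← hc]
    exact subEmb_mem S i

lemma cb_aux {k : ℕ} (M : Matrix (Fin k) (Fin n) ℝ) (N : Matrix (Fin n) (Fin k) ℝ)
    {f : Fin k → Fin n} (H : ¬ Function.Injective f) :
    (∑ σ : Equiv.Perm (Fin k), ((sign σ : ℤ) : ℝ) * ∏ x, M (σ x) (f x) * N (f x) x) = 0 := by
  obtain ⟨i, j, hfij, hij⟩ : ∃ i j, f i = f j ∧ i ≠ j := by
    rw [Function.Injective] at H
    push_neg at H
    obtain ⟨i, j, h1, h2⟩ := H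
    exact ⟨i, j, h1, h2⟩
  refine Finset.sum_involution (fun σ _ => σ * Equiv.swap i j) (fun σ _ => ?_)
    (fun σ _ _ => (not_congr Equiv.mul_swap_eq_iff).mpr hij) (fun _ _ => Finset.mem_univ _)
    (fun σ _ => Equiv.mul_swap_involutive i j σ)
  have hM : (∏ x, M (σ x) (f x)) = ∏ x, M ((σ * Equiv.swap i j) x) (f x) :=
    Fintype.prod_equiv (Equiv.swap i j) _ _ (by simp [Equiv.apply_swap_eq_self hfij])
  simp only [Finset.prod_mul_distrib]
  rw [← hM, Equiv.Perm.sign_mul, Equiv.Perm.sign_swap hij]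
  push_cast
  ring

lemma cauchyBinet {k : ℕ} (M : Matrix (Fin k) (Fin n) ℝ) (N : Matrix (Fin n) (Fin k) ℝ) :
    (M * N).det = ∑ T : FormIdx n k,
      (M.submatrix id (subEmb T)).det * (N.submatrix (subEmb T) id).det := by
  have step1 : (M * N).det = ∑ f : Fin k → Fin n, ∑ σ : Equiv.Perm (Fin k),
      ((sign σ : ℤ) : ℝ) * ∏ i, M (σ i) (f i) * N (f i) i := by
    simp only [Matrix.det_apply', Matrix.mul_apply, Finset.prod_univ_sum, Finset.mul_sum,
      Fintype.piFinset_univ]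
    rw [Finset.sum_comm]
  rw [step1]
  have step2 : (∑ f : Fin k → Fin n, ∑ σ : Equiv.Perm (Fin k),
      ((sign σ : ℤ) : ℝ) * ∏ i, M (σ i) (f i) * N (f i) i)
      = ∑ f ∈ Finset.univ.filter (fun f : Fin k → Fin n => Function.Injective f),
        ∑ σ : Equiv.Perm (Fin k), ((sign σ : ℤ) : ℝ) * ∏ i, M (σ i) (f i) * N (f i) i := by
    refine (Finset.sum_subset (Finset.filter_subset _ _) (fun f _ hf => ?_)).symm
    refine cb_aux M N ?_
    simpa using hf
  rw [step2]
  have step3 : (∑ f ∈ Finset.univ.filter (fun f : Fin k → Fin n => Function.Injective f),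
      ∑ σ : Equiv.Perm (Fin k), ((sign σ : ℤ) : ℝ) * ∏ i, M (σ i) (f i) * N (f i) i)
      = ∑ x : Σ _ : FormIdx n k, Equiv.Perm (Fin k),
        ∑ σ : Equiv.Perm (Fin k), ((sign σ : ℤ) : ℝ)
          * ∏ i, M (σ i) (subEmb x.1 (x.2 i)) * N (subEmb x.1 (x.2 i)) i := by
    refine (Finset.sum_bij (fun (x : Σ _ : FormIdx n k, Equiv.Perm (Fin k)) _ =>
      (fun i => subEmb x.1 (x.2 i))) ?_ ?_ ?_ ?_).symm
    · rintro ⟨T, π⟩ -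
      simp only [Finset.mem_filter, Finset.mem_univ, true_and]
      exact (subEmb_injective T).comp π.injective
    · intro x _ y _ h
      obtain ⟨T, π⟩ := x
      obtain ⟨T', π'⟩ := y
      have hT : T = T' := by
        apply Subtype.ext
        apply Finset.eq_of_subset_of_card_le
        · intro z hz
          obtain ⟨i, rfl⟩ := subEmb_surj T hz
          have := congrFun h (π.symm i)
          simp only [Equiv.apply_symm_apply] at this
          rw [this]
          exact subEmb_mem T' _
        · rw [T.2, T'.2]
      subst hT
      have hπ : π = π' := Equiv.ext fun i => subEmb_injective T (congrFun h i)
      rw [hπ]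
    · intro f hf
      rw [Finset.mem_filter] at hf
      have hinj := hf.2
      have hcard : (Finset.univ.image f).card = k := by
        rw [Finset.card_image_of_injective _ hinj, Finset.card_univ, Fintype.card_fin]
      set T : FormIdx n k := ⟨Finset.univ.image f, hcard⟩
      have hmem : ∀ i, f i ∈ T.1 := fun i => Finset.mem_image_of_mem _ (Finset.mem_univ i)
      have hπinj : Function.Injective
          (fun i => (T.1.orderIsoOfFin T.2).symm ⟨f i, hmem i⟩) := by
        intro a b hab
        have := congrArg (fun z => ((T.1.orderIsoOfFin T.2) z : Fin n)) hab
        simp only [OrderIso.apply_symm_apply] at this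
        exact hinj this
      refine ⟨⟨T, Equiv.ofBijective _ (Finite.injective_iff_bijective.1 hπinj)⟩,
        Finset.mem_univ _, ?_⟩
      funext i
      simp [subEmb, Equiv.ofBijective_apply]
    · intros; rfl
  rw [step3, ← Finset.univ_sigma_univ, Finset.sum_sigma]
  apply Finset.sum_congr rfl
  intro T _
  rw [Matrix.det_apply', Matrix.det_apply']
  have inner : ∀ π : Equiv.Perm (Fin k),
      (∑ σ : Equiv.Perm (Fin k), ((sign σ : ℤ) : ℝ)
        * ∏ i, M (σ i) (subEmb T (π i)) * N (subEmb T (π i)) i)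
      = ((sign π : ℤ) : ℝ)
        * (∑ τ : Equiv.Perm (Fin k), ((sign τ : ℤ) : ℝ) * ∏ j, M (τ j) (subEmb T j))
        * ∏ i, N (subEmb T (π i)) i := by
    intro π
    have reindex : ∀ σ : Equiv.Perm (Fin k),
        (∏ i, M (σ i) (subEmb T (π i))) = ∏ j, M ((σ * π⁻¹) j) (subEmb T j) := by
      intro σ
      rw [← Equiv.prod_comp π (fun j => M ((σ * π⁻¹) j) (subEmb T j))]
      apply Finset.prod_congr rfl
      intro i _
      simp [Equiv.Perm.mul_apply]
    have split : ∀ σ : Equiv.Perm (Fin k),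
        ((sign σ : ℤ) : ℝ) * ∏ i, M (σ i) (subEmb T (π i)) * N (subEmb T (π i)) i
        = (((sign σ : ℤ) : ℝ) * ∏ j, M ((σ * π⁻¹) j) (subEmb T j))
          * ∏ i, N (subEmb T (π i)) i := by
      intro σ
      rw [Finset.prod_mul_distrib, reindex σ]
      ring
    simp only [split]
    rw [← Finset.sum_mul]
    congr 1
    rw [Finset.mul_sum]
    refine (Fintype.sum_bijective (· * π) (Group.mulRight_bijective π) _ _ (fun τ => ?_)).symm
    simp only [mul_inv_cancel_right]
    rw [Equiv.Perm.sign_mul]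
    push_cast
    ring
  simp only [inner, Matrix.submatrix_apply, id_eq]
  trans (∑ τ : Equiv.Perm (Fin k), ((sign τ : ℤ) : ℝ) * ∏ j, M (τ j) (subEmb T j))
      * (∑ π : Equiv.Perm (Fin k), ((sign π : ℤ) : ℝ) * ∏ i, N (subEmb T (π i)) i)
  · rw [Finset.mul_sum]
    apply Finset.sum_congr rfl
    intro π _
    ring
  · rw [Finset.sum_mul]

end PTH









namespace PTH
variable {n l : ℕ}

lemma cb' {k : ℕ} (B C : Matrix (Fin n) (Fin n) ℝ) (S U : FormIdx n k) :
    ((B * C).submatrix (subEmb S) (subEmb U)).det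
      = ∑ T : FormIdx n k,
        (B.submatrix (subEmb S) (subEmb T)).det * (C.submatrix (subEmb T) (subEmb U)).det := by
  have h : (B * C).submatrix (subEmb S) (subEmb U)
      = (B.submatrix (subEmb S) id) * (C.submatrix id (subEmb U)) := by
    ext i j
    simp [Matrix.mul_apply]
  rw [h, cauchyBinet]
  apply Finset.sum_congr rfl
  intro T _
  rw [Matrix.submatrix_submatrix, Matrix.submatrix_submatrix]
  simp

lemma det_submatrix_transpose {k : ℕ} (B : Matrix (Fin n) (Fin n) ℝ) (S T : FormIdx n k) :
    ((B.transpose).submatrix (subEmb S) (subEmb T)).det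
      = (B.submatrix (subEmb T) (subEmb S)).det := by
  rw [show (B.transpose).submatrix (subEmb S) (subEmb T)
      = (B.submatrix (subEmb T) (subEmb S)).transpose from rfl, Matrix.det_transpose]

lemma shuffleSign_mul_self {t s : Finset (Fin n)} : shuffleSign t s * shuffleSign t s = 1 := by
  rw [shuffleSign, ← pow_add]
  exact Even.neg_one_pow ⟨_, rfl⟩

lemma cpl_bijective (hl : l ≤ n) : Function.Bijective (cpl hl) := by
  constructor
  · intro a b h
    rw [← cpl'_cpl hl a, ← cpl'_cpl hl b, h]
  · intro V
    exact ⟨cpl' hl V, cpl_cpl' hl V⟩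

lemma topCoeff_wedge (hl : l ≤ n) (ω : KForm n l) (ν : KForm n (n - l)) :
    topCoeff (wedgeP ω ν)
      = ∑ T : FormIdx n l, shuffleSign T.1 T.1ᶜ * ω T * ν (cpl hl T) := by
  unfold topCoeff
  rw [dif_pos (by omega : l + (n - l) = n)]
  unfold wedgeP
  apply Finset.sum_congr rfl
  intro T _
  rw [dif_pos (Finset.subset_univ _)]
  have hc : Finset.univ \ T.1 = T.1ᶜ := (Finset.compl_eq_univ_sdiff T.1).symm
  have h2 : (⟨Finset.univ \ T.1, by rw [Finset.card_sdiff, Finset.inter_eq_left.mpr (Finset.subset_univ _), T.2]; simp⟩ :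
      FormIdx n (n - l)) = cpl hl T := Subtype.ext hc
  rw [h2, hc]

/-- the delta form -/
def dForm {k : ℕ} (T : FormIdx n k) : KForm n k := fun T' => if T' = T then 1 else 0

lemma star_formula (hl : l ≤ n) (B : Matrix (Fin n) (Fin n) ℝ)
    (star : KForm n l → KForm n (n - l))
    (hs : ∀ ω μ : KForm n l, topCoeff (wedgeP ω (star μ)) = pairingA B ω μ)
    (μ : KForm n l) (T : FormIdx n l) :
    star μ (cpl hl T) = shuffleSign T.1 T.1ᶜ
      * ∑ S : FormIdx n l, (B.submatrix (subEmb S) (subEmb T)).det * μ S := by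
  have h := hs (dForm T) μ
  rw [topCoeff_wedge hl] at h
  have hL : (∑ T' : FormIdx n l, shuffleSign T'.1 T'.1ᶜ * dForm T T' * star μ (cpl hl T'))
      = shuffleSign T.1 T.1ᶜ * star μ (cpl hl T) := by
    rw [Finset.sum_eq_single T]
    · rw [dForm, if_pos rfl, mul_one]
    · intro T' _ hT'
      rw [dForm, if_neg hT', mul_zero, zero_mul]
    · intro h'; exact absurd (Finset.mem_univ T) h'
  have hR : pairingA B (dForm T) μ
      = ∑ S : FormIdx n l, (B.submatrix (subEmb S) (subEmb T)).det * μ S := by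
    unfold pairingA
    rw [Finset.sum_eq_single T]
    · apply Finset.sum_congr rfl
      intro S _
      rw [dForm, if_pos rfl, mul_one]
    · intro T' _ hT'
      apply Finset.sum_eq_zero
      intro S _
      rw [dForm, if_neg hT', mul_zero, zero_mul]
    · intro h'; exact absurd (Finset.mem_univ T) h'
  rw [hL, hR] at h
  calc star μ (cpl hl T)
      = (shuffleSign T.1 T.1ᶜ * shuffleSign T.1 T.1ᶜ) * star μ (cpl hl T) := by
        rw [shuffleSign_mul_self, one_mul]
    _ = shuffleSign T.1 T.1ᶜ * (shuffleSign T.1 T.1ᶜ * star μ (cpl hl T)) := by ring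
    _ = _ := by rw [h]

end PTH

namespace PTH
variable {n l : ℕ}

lemma jacobi (hl : l ≤ n) (κ : Matrix (Fin n) (Fin n) ℝ) (hκ : κ * κ = 1)
    (W Y : FormIdx n l) :
    shuffleSign W.1 W.1ᶜ * (κ.submatrix (subEmb (cpl hl W)) (subEmb (cpl hl Y))).det
      = κ.det * (shuffleSign Y.1 Y.1ᶜ * (κ.submatrix (subEmb Y) (subEmb W)).det) := by
  set N : Matrix (Fin n) (Fin n) ℝ := Matrix.of fun i j =>
    if h : (j : ℕ) < l then (1 : Matrix (Fin n) (Fin n) ℝ) i (subEmb W ⟨j, h⟩)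
    else κ i (subEmb (cpl hl Y) ⟨(j : ℕ) - l, by omega⟩) with hN
  have hNL : ∀ S : FormIdx n l, N.submatrix (subEmb S) (colL hl)
      = (1 : Matrix (Fin n) (Fin n) ℝ).submatrix (subEmb S) (subEmb W) := by
    intro S
    ext i a
    have hval : ((colL hl a : Fin n) : ℕ) < l := a.2
    simp only [Matrix.submatrix_apply, hN, Matrix.of_apply]
    rw [dif_pos hval]
    congr 1
  have hNR : ∀ S : FormIdx n l, N.submatrix (subEmb (cpl hl S)) (colR hl)
      = κ.submatrix (subEmb (cpl hl S)) (subEmb (cpl hl Y)) := by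
    intro S
    ext i b
    have hval : ¬ ((colR hl b : Fin n) : ℕ) < l := by simp [colR]
    simp only [Matrix.submatrix_apply, hN, Matrix.of_apply]
    rw [dif_neg hval]
    congr 1
    exact Fin.ext (by simp [colR])
  have hKNL : ∀ S : FormIdx n l, (κ * N).submatrix (subEmb S) (colL hl)
      = κ.submatrix (subEmb S) (subEmb W) := by
    intro S
    ext i a
    rw [Matrix.submatrix_apply, Matrix.mul_apply, Matrix.submatrix_apply]
    have hterm : ∀ x, N x (colL hl a)
        = (1 : Matrix (Fin n) (Fin n) ℝ) x (subEmb W a) := fun x => by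
      have hval : ((colL hl a : Fin n) : ℕ) < l := a.2
      simp only [hN, Matrix.of_apply]
      rw [dif_pos hval]
      congr 1
    simp only [hterm]
    rw [← Matrix.mul_apply, Matrix.mul_one]
  have hKNR : ∀ S : FormIdx n l, (κ * N).submatrix (subEmb (cpl hl S)) (colR hl)
      = (1 : Matrix (Fin n) (Fin n) ℝ).submatrix (subEmb (cpl hl S)) (subEmb (cpl hl Y)) := by
    intro S
    ext i b
    rw [Matrix.submatrix_apply, Matrix.mul_apply, Matrix.submatrix_apply]
    have hterm : ∀ x, N x (colR hl b) = κ x (subEmb (cpl hl Y) b) := fun x => by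
      have hval : ¬ ((colR hl b : Fin n) : ℕ) < l := by simp [colR]
      simp only [hN, Matrix.of_apply]
      rw [dif_neg hval]
      congr 1
      exact Fin.ext (by simp [colR])
    simp only [hterm]
    rw [← Matrix.mul_apply, hκ]
  have hdetN : N.det
      = shuffleSign W.1 W.1ᶜ * (κ.submatrix (subEmb (cpl hl W)) (subEmb (cpl hl Y))).det := by
    rw [laplace hl N]
    rw [Finset.sum_eq_single W]
    · rw [hNL W, det_submatrix_one, if_pos rfl, sign_shufflePerm, hNR W]
      ring
    · intro S _ hS
      rw [hNL S, det_submatrix_one, if_neg hS]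
      ring
    · intro h'; exact absurd (Finset.mem_univ W) h'
  have hdetKN : (κ * N).det
      = shuffleSign Y.1 Y.1ᶜ * (κ.submatrix (subEmb Y) (subEmb W)).det := by
    rw [laplace hl (κ * N)]
    rw [Finset.sum_eq_single Y]
    · rw [hKNL Y, hKNR Y, det_submatrix_one, if_pos rfl, sign_shufflePerm]
      ring
    · intro S _ hS
      rw [hKNR S, det_submatrix_one, if_neg (fun hc => hS ((cpl_bijective hl).1 hc))]
      ring
    · intro h'; exact absurd (Finset.mem_univ Y) h'
  have hmul : (κ * N).det = κ.det * N.det := Matrix.det_mul κ N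
  have h2 : κ.det * κ.det = 1 := by rw [← Matrix.det_mul, hκ, Matrix.det_one]
  have E : shuffleSign Y.1 Y.1ᶜ * (κ.submatrix (subEmb Y) (subEmb W)).det
      = κ.det * (shuffleSign W.1 W.1ᶜ
        * (κ.submatrix (subEmb (cpl hl W)) (subEmb (cpl hl Y))).det) := by
    rw [← hdetKN, hmul, hdetN]
  linear_combination (-κ.det) * E
    - (shuffleSign W.1 W.1ᶜ
        * (κ.submatrix (subEmb (cpl hl W)) (subEmb (cpl hl Y))).det) * h2

end PTH


open PTH

/-- If `κ² = 1` and `κA = Aᵗκᵗ`, then the pullback `κ* = ∧ˡκᵗ` on (constant-coefficient)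
`l`-forms satisfies `κ* ∘ *^{Aᵗ} = (det κ) · *^A ∘ κ*`, the twisted Hodge operators being
characterized by `ω ∧ (*^B μ) = (ω|μ)_B dx` for `B = A, Aᵗ`. -/
theorem pullback_twisted_hodge {n l : ℕ} (hl : l ≤ n)
    (κ A : Matrix (Fin n) (Fin n) ℝ)
    (hκ : κ * κ = 1) (hA : IsUnit A.det) (hcomm : κ * A = A.transpose * κ.transpose)
    (starA : KForm n l → KForm n (n - l))
    (starAt : KForm n l → KForm n (n - l))
    (hsA : ∀ ω μ : KForm n l, topCoeff (wedgeP ω (starA μ)) = pairingA A ω μ)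
    (hsAt : ∀ ω μ : KForm n l,
      topCoeff (wedgeP ω (starAt μ)) = pairingA A.transpose ω μ) :
    ∀ μ : KForm n l,
      formMap κ.transpose (starAt μ) = κ.det • starA (formMap κ.transpose μ) := by
  intro μ
  funext V
  set Y : FormIdx n l := cpl' hl V with hYdef
  have hVY : cpl hl Y = V := cpl_cpl' hl V
  have hsym : (κ * A).transpose = κ * A := by rw [Matrix.transpose_mul, ← hcomm]
  have hdetsym : ∀ X Z : FormIdx n l,
      ((κ * A).submatrix (subEmb X) (subEmb Z)).det
        = ((κ * A).submatrix (subEmb Z) (subEmb X)).det := by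
    intro X Z
    rw [← det_submatrix_transpose (κ * A) X Z, hsym]
  -- right-hand side
  have hRHS : (κ.det • starA (formMap κ.transpose μ)) V
      = κ.det * (shuffleSign Y.1 Y.1ᶜ
          * ∑ X : FormIdx n l, ((κ * A).submatrix (subEmb X) (subEmb Y)).det * μ X) := by
    rw [Pi.smul_apply, smul_eq_mul, ← hVY, star_formula hl A starA hsA]
    congr 2
    calc ∑ S : FormIdx n l, (A.submatrix (subEmb S) (subEmb Y)).det * formMap κ.transpose μ S
        = ∑ S : FormIdx n l, ∑ X : FormIdx n l,
            (κ.submatrix (subEmb X) (subEmb S)).det * (A.submatrix (subEmb S) (subEmb Y)).det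
              * μ X := by
          apply Finset.sum_congr rfl
          intro S _
          rw [formMap, Finset.mul_sum]
          apply Finset.sum_congr rfl
          intro X _
          rw [det_submatrix_transpose]
          ring
      _ = ∑ X : FormIdx n l, ∑ S : FormIdx n l,
            (κ.submatrix (subEmb X) (subEmb S)).det * (A.submatrix (subEmb S) (subEmb Y)).det
              * μ X := Finset.sum_comm
      _ = ∑ X : FormIdx n l, ((κ * A).submatrix (subEmb X) (subEmb Y)).det * μ X := by
          apply Finset.sum_congr rfl
          intro X _
          rw [cb', Finset.sum_mul]
  -- left-hand side
  have hLHS : formMap κ.transpose (starAt μ) V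
      = κ.det * (shuffleSign Y.1 Y.1ᶜ
          * ∑ X : FormIdx n l, ((κ * A).submatrix (subEmb Y) (subEmb X)).det * μ X) := by
    rw [formMap]
    have hre : (∑ U : FormIdx n (n - l),
          (κ.transpose.submatrix (subEmb V) (subEmb U)).det * starAt μ U)
        = ∑ W : FormIdx n l,
          (κ.transpose.submatrix (subEmb V) (subEmb (cpl hl W))).det * starAt μ (cpl hl W) :=
      (Fintype.sum_bijective (cpl hl) (cpl_bijective hl) _ _ (fun W => rfl)).symm
    rw [hre]
    have hterm : ∀ W : FormIdx n l,
        (κ.transpose.submatrix (subEmb V) (subEmb (cpl hl W))).det * starAt μ (cpl hl W)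
        = κ.det * (shuffleSign Y.1 Y.1ᶜ
            * ((κ.submatrix (subEmb Y) (subEmb W)).det
              * ∑ X : FormIdx n l, (A.submatrix (subEmb W) (subEmb X)).det * μ X)) := by
      intro W
      rw [star_formula hl A.transpose starAt hsAt]
      rw [det_submatrix_transpose, ← hVY]
      have hj := jacobi hl κ hκ W Y
      have hX : ∀ X : FormIdx n l,
          ((A.transpose).submatrix (subEmb X) (subEmb W)).det
            = (A.submatrix (subEmb W) (subEmb X)).det := fun X =>
        det_submatrix_transpose A X W
      simp only [hX]
      calc (κ.submatrix (subEmb (cpl hl W)) (subEmb (cpl hl Y))).det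
            * (shuffleSign W.1 W.1ᶜ
              * ∑ X : FormIdx n l, (A.submatrix (subEmb W) (subEmb X)).det * μ X)
          = (shuffleSign W.1 W.1ᶜ
              * (κ.submatrix (subEmb (cpl hl W)) (subEmb (cpl hl Y))).det)
            * ∑ X : FormIdx n l, (A.submatrix (subEmb W) (subEmb X)).det * μ X := by ring
        _ = (κ.det * (shuffleSign Y.1 Y.1ᶜ * (κ.submatrix (subEmb Y) (subEmb W)).det))
            * ∑ X : FormIdx n l, (A.submatrix (subEmb W) (subEmb X)).det * μ X := by rw [hj]
        _ = _ := by ring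
    rw [Finset.sum_congr rfl (fun W _ => hterm W)]
    rw [← Finset.mul_sum, ← Finset.mul_sum]
    congr 2
    calc ∑ W : FormIdx n l, (κ.submatrix (subEmb Y) (subEmb W)).det
            * ∑ X : FormIdx n l, (A.submatrix (subEmb W) (subEmb X)).det * μ X
        = ∑ W : FormIdx n l, ∑ X : FormIdx n l,
            (κ.submatrix (subEmb Y) (subEmb W)).det
              * (A.submatrix (subEmb W) (subEmb X)).det * μ X := by
          apply Finset.sum_congr rfl
          intro W _
          rw [Finset.mul_sum]
          apply Finset.sum_congr rfl
          intro X _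
          ring
      _ = ∑ X : FormIdx n l, ∑ W : FormIdx n l,
            (κ.submatrix (subEmb Y) (subEmb W)).det
              * (A.submatrix (subEmb W) (subEmb X)).det * μ X := Finset.sum_comm
      _ = ∑ X : FormIdx n l, ((κ * A).submatrix (subEmb Y) (subEmb X)).det * μ X := by
          apply Finset.sum_congr rfl
          intro X _
          rw [cb', Finset.sum_mul]
  rw [hLHS, hRHS]
  simp only [hdetsym]
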